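/- arXiv:1408.3729 — 3 statements merged into one kernel-verified Lean document; each statement's English description precedes it below -/
import Mathlib

section
/- Let n ≥ 1 and let ι be a fixed-point-free involution of ZMod (2*n). Define the boundary permutation ρ of ι by ρ(i) = ι(i) + 1 (so ρ is the composition of ι with the cyclic shift i ↦ i+1; it is a permutation of ZMod (2*n)). Then the number of orbits (cycles) of ρ is congruent to n + 1 modulo 2. -/
open Equiv Equiv.Perm MulAction

private lemma orbit_count {α : Type*} [Fintype α] [DecidableEq α] (σ : Equiv.Perm α) :
    Nat.card (MulAction.orbitRel.Quotient (Subgroup.zpowers σ) α) + σ.support.card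
      = Fintype.card α + Multiset.card σ.cycleType := by
  classical
  have hrel : ∀ a b : α, (orbitRel (Subgroup.zpowers σ) α) a b → σ.SameCycle b a := by
    intro a b h
    rw [orbitRel_apply, MulAction.mem_orbit_iff] at h
    obtain ⟨⟨g, hg⟩, hga⟩ := h
    obtain ⟨k, rfl⟩ := Subgroup.mem_zpowers_iff.mp hg
    exact ⟨k, hga⟩
  set S := ({x : α // σ x = x} ⊕ {c : Equiv.Perm α // c ∈ σ.cycleFactorsFinset}) with hS
  set f : α → S := fun x =>
    if h : σ x = x then Sum.inl ⟨x, h⟩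
    else Sum.inr ⟨σ.cycleOf x, (cycleOf_mem_cycleFactorsFinset_iff).mpr (mem_support.mpr h)⟩
    with hf
  have hwd : ∀ a b : α, (orbitRel (Subgroup.zpowers σ) α) a b → f a = f b := by
    intro a b h
    have hsc : σ.SameCycle b a := hrel a b h
    by_cases hb : σ b = b
    · obtain ⟨k, hk⟩ := hsc
      have : a = b := by
        rw [← hk, (σ.zpow_apply_eq_self_of_apply_eq_self hb k)]
      subst this; rfl
    · have ha : ¬ σ a = a := by
        intro ha
        obtain ⟨k, hk⟩ := hsc
        have h1 : (σ ^ (-k)) a = a := σ.zpow_apply_eq_self_of_apply_eq_self ha (-k)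
        have h2 : b = a := by
          have := congrArg (σ ^ (-k)) hk
          rw [← Equiv.Perm.mul_apply, ← zpow_add, neg_add_cancel, zpow_zero,
            Equiv.Perm.one_apply, h1] at this
          exact this
        rw [h2, ha] at hb
        exact hb rfl
      rw [hf]
      simp only [dif_neg ha, dif_neg hb]
      congr 1
      exact Subtype.ext hsc.cycleOf_eq.symm
  let F : MulAction.orbitRel.Quotient (Subgroup.zpowers σ) α → S :=
    Quotient.lift f hwd
  have hFbij : Function.Bijective F := by
    constructor
    · intro q1 q2
      induction q1 using Quotient.inductionOn with | h a =>
      induction q2 using Quotient.inductionOn with | h b =>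
      intro hab
      change f a = f b at hab
      rw [hf] at hab
      dsimp only at hab
      by_cases ha : σ a = a <;> by_cases hb : σ b = b
      · rw [dif_pos ha, dif_pos hb] at hab
        obtain rfl : a = b := congrArg Subtype.val (Sum.inl.inj hab)
        exact Quotient.sound (MulAction.mem_orbit_self _)
      · rw [dif_pos ha, dif_neg hb] at hab; exact absurd hab (by simp)
      · rw [dif_neg ha, dif_pos hb] at hab; exact absurd hab (by simp)
      · rw [dif_neg ha, dif_neg hb] at hab
        have hcyc : σ.cycleOf a = σ.cycleOf b :=
          congrArg Subtype.val (Sum.inr.inj hab)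
        have hbsup : b ∈ (σ.cycleOf a).support := by
          rw [hcyc]
          exact mem_support_cycleOf_iff.mpr ⟨Equiv.Perm.SameCycle.refl _ _, mem_support.mpr hb⟩
        have hsc : σ.SameCycle a b := (mem_support_cycleOf_iff.mp hbsup).1
        apply Quotient.sound
        obtain ⟨k, hk⟩ := hsc.symm
        exact MulAction.mem_orbit_iff.mpr
          ⟨⟨σ ^ k, Subgroup.zpow_mem _ (Subgroup.mem_zpowers σ) k⟩, hk⟩
    · rintro (⟨x, hx⟩ | ⟨c, hc⟩)
      · refine ⟨Quotient.mk'' x, ?_⟩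
        change f x = _
        rw [hf]; simp [hx]
      · have hc' := (mem_cycleFactorsFinset_iff.mp hc)
        obtain ⟨a, ha⟩ := hc'.1.nonempty_support
        have hax : σ a ≠ a := by
          have := hc'.2 a ha
          rw [← this]
          exact mem_support.mp ha
        refine ⟨Quotient.mk'' a, ?_⟩
        change f a = _
        rw [hf]
        simp only [dif_neg hax]
        congr 1
        exact Subtype.ext (cycle_is_cycleOf ha hc).symm
  have hcard : Nat.card (MulAction.orbitRel.Quotient (Subgroup.zpowers σ) α)
      = Nat.card {x : α // σ x = x} + Nat.card {c : Equiv.Perm α // c ∈ σ.cycleFactorsFinset} := by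
    rw [Nat.card_congr (Equiv.ofBijective F hFbij), hS, Nat.card_sum]
  have hfix : Nat.card {x : α // σ x = x} + σ.support.card = Fintype.card α := by
    rw [Nat.card_eq_fintype_card, Fintype.card_subtype]
    have : σ.support = Finset.univ.filter (fun x => ¬ σ x = x) := by
      ext x; simp [mem_support]
    rw [this]
    exact Finset.card_filter_add_card_filter_not _
  have hlen : Nat.card {c : Equiv.Perm α // c ∈ σ.cycleFactorsFinset}
      = Multiset.card σ.cycleType := by
    rw [Nat.card_eq_fintype_card, Fintype.card_coe, cycleType]
    simp
  omega

private lemma units_neg_one_pow_mod (a b : ℕ) (h : ((-1 : ℤˣ)) ^ a = (-1) ^ b) :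
    a % 2 = b % 2 := by
  rcases Nat.even_or_odd a with ha | ha <;> rcases Nat.even_or_odd b with hb | hb
  · rw [Nat.even_iff] at ha hb; omega
  · rw [ha.neg_one_pow, hb.neg_one_pow] at h; exact absurd h (by decide)
  · rw [ha.neg_one_pow, hb.neg_one_pow] at h; exact absurd h (by decide)
  · rw [Nat.odd_iff] at ha hb; omega

/-- For `n ≥ 1` and a fixed-point-free involution `ι` of `ZMod (2*n)`, the number of
orbits (cycles) of the boundary permutation `ρ` defined by `ρ i = ι i + 1` is congruent
to `n + 1` modulo `2`. -/
theorem fpb_orbit_count_parity (n : ℕ) (hn : 1 ≤ n)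
    (ι ρ : Equiv.Perm (ZMod (2 * n)))
    (hinv : Function.Involutive ι) (hfpf : ∀ i, ι i ≠ i)
    (hρ : ∀ i, ρ i = ι i + 1) :
    Nat.card (MulAction.orbitRel.Quotient (Subgroup.zpowers ρ) (ZMod (2 * n))) % 2
      = (n + 1) % 2 := by
  haveI : NeZero (2 * n) := ⟨by omega⟩
  haveI : Fact (1 < 2 * n) := ⟨by omega⟩
  -- ρ as a product
  have hρeq : ρ = Equiv.addRight (1 : ZMod (2 * n)) * ι := by
    ext i
    simp [hρ i]
  -- sign of ι
  have hι2 : ι ^ 2 = 1 := by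
    ext i; simp [sq, Equiv.Perm.mul_apply, hinv i]
  have hιne : ι ≠ 1 := by
    intro h
    exact hfpf 0 (by simp [h])
  have hord : orderOf ι = 2 := orderOf_eq_prime hι2 hιne
  have hsuppι : ι.support = Finset.univ := by
    ext i; simp [Equiv.Perm.mem_support, hfpf i]
  have hmem2 : ∀ k ∈ ι.cycleType, k = 2 := by
    intro k hk
    have h1 : 2 ≤ k := Equiv.Perm.two_le_of_mem_cycleType hk
    have h2 : k ∣ 2 := by
      rw [← hord, ← Equiv.Perm.lcm_cycleType]
      exact Multiset.dvd_lcm hk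
    have := Nat.le_of_dvd (by norm_num) h2
    omega
  have hrep : ι.cycleType = Multiset.replicate (Multiset.card ι.cycleType) 2 :=
    Multiset.eq_replicate_card.mpr hmem2
  have hsum : ι.cycleType.sum = 2 * n := by
    rw [Equiv.Perm.sum_cycleType, hsuppι, Finset.card_univ, ZMod.card]
  have hlenι : Multiset.card ι.cycleType = n := by
    have := hsum
    rw [hrep] at this
    simp [Multiset.sum_replicate] at this
    omega
  have hsignι : Equiv.Perm.sign ι = (-1 : ℤˣ) ^ n := by
    rw [Equiv.Perm.sign_of_cycleType, hsum, hlenι, pow_add, pow_mul]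
    simp
  -- sign of the shift
  have hshift_ne : ∀ x : ZMod (2 * n), Equiv.addRight (1 : ZMod (2 * n)) x ≠ x := by
    intro x h
    simp only [Equiv.coe_addRight] at h
    have : (1 : ZMod (2 * n)) = 0 := by
      have := congrArg (fun y => y - x) h
      simpa using this
    exact one_ne_zero this
  have hcyc : (Equiv.addRight (1 : ZMod (2 * n))).IsCycle := by
    refine ⟨0, hshift_ne 0, fun y _ => ?_⟩
    refine ⟨(y.val : ℤ), ?_⟩
    rw [show ∀ (a : ZMod (2 * n)) (k : ℤ), (Equiv.addRight a) ^ k = Equiv.addRight (k • a) by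
      intro a k
      induction k using Int.induction_on with
      | zero => ext; simp
      | succ m ih => ext x; simp [zpow_add_one, ih, add_smul, add_assoc]; ring
      | pred m ih => ext x; simp [zpow_sub_one, ih, sub_smul, sub_eq_add_neg, add_assoc]]
    simp only [Equiv.coe_addRight]
    rw [Int.smul_one_eq_cast]
    push_cast
    rw [zero_add, ZMod.natCast_val, ZMod.cast_id]
  have hsuppshift : (Equiv.addRight (1 : ZMod (2 * n))).support = Finset.univ := by
    ext x; simp [Equiv.Perm.mem_support, hshift_ne x]
  have hsignshift : Equiv.Perm.sign (Equiv.addRight (1 : ZMod (2 * n))) = -1 := by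
    rw [hcyc.sign, hsuppshift, Finset.card_univ, ZMod.card]
    rw [pow_mul]
    simp
  -- sign of ρ
  have hsignρ : Equiv.Perm.sign ρ = (-1 : ℤˣ) ^ (n + 1) := by
    rw [hρeq, map_mul, hsignshift, hsignι, pow_succ, mul_comm]
  have hkey : (ρ.cycleType.sum + Multiset.card ρ.cycleType) % 2 = (n + 1) % 2 := by
    apply units_neg_one_pow_mod
    rw [← Equiv.Perm.sign_of_cycleType, hsignρ]
  have hcount := orbit_count ρ
  have hsupρ : ρ.cycleType.sum = ρ.support.card := Equiv.Perm.sum_cycleType ρ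
  rw [ZMod.card] at hcount
  omega
end

section
/- Let n ≥ 1 and let ι be a fixed-point-free involution of ZMod (2*n), with boundary permutation ρ defined by ρ(i) = ι(i) + 1. If ρ has exactly one orbit (i.e., ρ is a (2n)-cycle), then n is even. -/
/-- If the boundary permutation `ρ` (given by `ρ i = ι i + 1`) of a fixed-point-free
involution `ι` of `ZMod (2*n)`, `n ≥ 1`, has exactly one orbit (i.e. `ρ` is a
`2n`-cycle), then `n` is even. -/
theorem fpb_single_orbit_even (n : ℕ) (hn : 1 ≤ n)
    (ι ρ : Equiv.Perm (ZMod (2 * n)))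
    (hinv : Function.Involutive ι) (hfpf : ∀ i, ι i ≠ i)
    (hρ : ∀ i, ρ i = ι i + 1)
    (hone : Nat.card (MulAction.orbitRel.Quotient (Subgroup.zpowers ρ) (ZMod (2 * n))) = 1) :
    Even n := by
  haveI : NeZero (2 * n) := ⟨by omega⟩
  haveI : Fact (1 < 2 * n) := ⟨by omega⟩
  have hcard : Fintype.card (ZMod (2 * n)) = 2 * n := ZMod.card _
  -- every two points are in the same cycle of ρ
  have hsc : ∀ x y : ZMod (2 * n), ρ.SameCycle x y := by
    have hsub : Subsingleton (MulAction.orbitRel.Quotient (Subgroup.zpowers ρ) (ZMod (2 * n))) :=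
      Nat.card_eq_one_iff_unique.mp hone |>.1
    intro x y
    have h : (⟦y⟧ : MulAction.orbitRel.Quotient (Subgroup.zpowers ρ) (ZMod (2 * n))) = ⟦x⟧ :=
      hsub.elim _ _
    have h' := Quotient.exact' h
    obtain ⟨⟨g, i, rfl⟩, hg⟩ := h'
    exact ⟨i, hg⟩
  -- ρ has no fixed points
  have hρfpf : ∀ x, ρ x ≠ x := by
    intro x hx
    have h01 : (0 : ZMod (2 * n)) ≠ 1 := zero_ne_one
    have hfix : ∀ i : ℤ, (ρ ^ i) x = x :=
      Equiv.Perm.zpow_apply_eq_self_of_apply_eq_self hx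
    obtain ⟨y, hy⟩ := exists_ne x
    obtain ⟨i, hi⟩ := hsc x y
    exact hy ((hfix i).symm.trans hi).symm
  -- ρ is a cycle with full support
  have hρcyc : ρ.IsCycle := ⟨0, hρfpf 0, fun y _ => hsc 0 y⟩
  have hρsupp : ρ.support = Finset.univ := Finset.eq_univ_iff_forall.mpr fun x =>
    Equiv.Perm.mem_support.mpr (hρfpf x)
  have hsignρ : Equiv.Perm.sign ρ = -1 := by
    rw [hρcyc.sign, hρsupp, Finset.card_univ, hcard]
    simp [pow_mul]
  -- sign of ι
  have hιsupp : ι.support = Finset.univ := Finset.eq_univ_iff_forall.mpr fun x =>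
    Equiv.Perm.mem_support.mpr (hfpf x)
  have hord : orderOf ι = 2 := by
    apply orderOf_eq_prime
    · ext x; simp [sq, hinv x]
    · intro h
      exact hfpf 0 (by rw [h]; rfl)
  obtain ⟨m, hm⟩ := Equiv.Perm.cycleType_prime_order (by rw [hord]; exact Nat.prime_two)
  rw [hord] at hm
  have hsum : ι.cycleType.sum = 2 * n := by rw [Equiv.Perm.sum_cycleType, hιsupp, Finset.card_univ, hcard]
  have hmn : m + 1 = n := by
    rw [hm, Multiset.sum_replicate, smul_eq_mul] at hsum
    omega
  have hsignι : Equiv.Perm.sign ι = (-1) ^ n := by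
    rw [Equiv.Perm.sign_of_cycleType, hm, Multiset.sum_replicate, Multiset.card_replicate,
      smul_eq_mul, hmn]
    rw [pow_add, pow_mul]
    simp
  -- sign of the translation
  have h10 : (1 : ZMod (2 * n)) ≠ 0 := one_ne_zero
  have hccyc : (Equiv.addLeft (1 : ZMod (2 * n))).IsCycle := by
    refine ⟨0, by simp [h10], fun y _ => ?_⟩
    refine ⟨(y.val : ℤ), ?_⟩
    rw [Equiv.zsmul_addLeft]
    simp [ZMod.natCast_val, ZMod.cast_id]
  have hcsupp : (Equiv.addLeft (1 : ZMod (2 * n))).support = Finset.univ :=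
    Finset.eq_univ_iff_forall.mpr fun x => Equiv.Perm.mem_support.mpr (by
      intro h
      simp only [Equiv.coe_addLeft] at h
      exact h10 (by linear_combination h))
  have hsignc : Equiv.Perm.sign (Equiv.addLeft (1 : ZMod (2 * n))) = -1 := by
    rw [hccyc.sign, hcsupp, Finset.card_univ, hcard]
    simp [pow_mul]
  -- ρ = addLeft 1 * ι
  have hfactor : ρ = Equiv.addLeft (1 : ZMod (2 * n)) * ι := by
    ext x
    simp [hρ x, add_comm]
  have hmul := hsignρ
  rw [hfactor, map_mul, hsignc, hsignι] at hmul
  have hpow : (-1 : ℤˣ) ^ n = 1 :=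
    mul_left_cancel (a := (-1 : ℤˣ)) (by rw [hmul, mul_one])
  exact (neg_one_pow_eq_one_iff_even (by decide : (-1:ℤˣ) ≠ 1)).mp hpow
end

section
/- Let n ≥ 1, let ι be a fixed-point-free involution of ZMod (2*n), let r be the reversal permutation r(i) = -i - 1 of ZMod (2*n), and let m be the negation permutation m(i) = -i. Then r ∘ ι ∘ r is again a fixed-point-free involution, and its boundary permutation ρ' (defined by ρ'(i) = (r ∘ ι ∘ r)(i) + 1) equals m ∘ ρ⁻¹ ∘ m⁻¹, where ρ(i) = ι(i) + 1 is the boundary permutation of ι. In particular ρ' and ρ have the same number of orbits. -/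
lemma fpb_orbit_card_conj {α : Type*} (σ c : Equiv.Perm α) :
    Nat.card (MulAction.orbitRel.Quotient (Subgroup.zpowers (c * σ * c⁻¹)) α)
      = Nat.card (MulAction.orbitRel.Quotient (Subgroup.zpowers σ) α) := by
  refine Nat.card_congr (Quotient.congr c.symm ?_)
  intro a b
  simp only [MulAction.orbitRel_apply, MulAction.mem_orbit_iff]
  constructor
  · rintro ⟨⟨g, k, rfl⟩, hg⟩
    refine ⟨⟨σ ^ k, k, rfl⟩, ?_⟩
    have hg' : ((c * σ * c⁻¹) ^ k) b = a := hg
    rw [conj_zpow] at hg'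
    show (σ ^ k) (c.symm b) = c.symm a
    apply c.injective
    simpa [Equiv.Perm.mul_apply, Equiv.Perm.inv_def] using hg'
  · rintro ⟨⟨g, k, rfl⟩, hg⟩
    refine ⟨⟨(c * σ * c⁻¹) ^ k, k, rfl⟩, ?_⟩
    have hg' : (σ ^ k) (c.symm b) = c.symm a := hg
    show ((c * σ * c⁻¹) ^ k) b = a
    rw [conj_zpow]
    simp [Equiv.Perm.mul_apply, Equiv.Perm.inv_def, hg']

/-- Conjugating a fixed-point-free involution `ι` of `ZMod (2*n)` by the reversal
`r : i ↦ -i - 1` yields again a fixed-point-free involution, whose boundary permutation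
`ρ'` (given by `ρ' i = (r ∘ ι ∘ r) i + 1`) equals `m ∘ ρ⁻¹ ∘ m⁻¹`, where `m : i ↦ -i`
is negation and `ρ i = ι i + 1` is the boundary permutation of `ι`.  In particular
`ρ'` and `ρ` have the same number of orbits. -/
theorem fpb_reversal_conjugation (n : ℕ) (hn : 1 ≤ n)
    (ι r m ρ ρ' : Equiv.Perm (ZMod (2 * n)))
    (hinv : Function.Involutive ι) (hfpf : ∀ i, ι i ≠ i)
    (hr : ∀ i, r i = -i - 1)
    (hm : ∀ i, m i = -i)
    (hρ : ∀ i, ρ i = ι i + 1)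
    (hρ' : ∀ i, ρ' i = (r * ι * r) i + 1) :
    Function.Involutive (r * ι * r : Equiv.Perm (ZMod (2 * n))) ∧
      (∀ i, (r * ι * r) i ≠ i) ∧
      ρ' = m * ρ⁻¹ * m⁻¹ ∧
      Nat.card (MulAction.orbitRel.Quotient (Subgroup.zpowers ρ') (ZMod (2 * n)))
        = Nat.card (MulAction.orbitRel.Quotient (Subgroup.zpowers ρ) (ZMod (2 * n))) := by
  have hr2 : ∀ i : ZMod (2 * n), r (r i) = i := by
    intro i; rw [hr, hr]; ring
  have hminv : ∀ i : ZMod (2 * n), m⁻¹ i = -i := by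
    intro i
    apply m.injective
    rw [← Equiv.Perm.mul_apply, mul_inv_cancel, Equiv.Perm.one_apply, hm, neg_neg]
  have hρinv : ∀ j : ZMod (2 * n), ρ⁻¹ j = ι (j - 1) := by
    intro j
    apply ρ.injective
    rw [← Equiv.Perm.mul_apply, mul_inv_cancel, Equiv.Perm.one_apply, hρ, hinv (j - 1), sub_add_cancel]
  have heq : ρ' = m * ρ⁻¹ * m⁻¹ := by
    ext i
    rw [hρ', Equiv.Perm.mul_apply, Equiv.Perm.mul_apply,
      Equiv.Perm.mul_apply, Equiv.Perm.mul_apply, hminv, hρinv, hm, hr]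
    rw [hr i]
    ring
  refine ⟨?_, ?_, heq, ?_⟩
  · intro x
    simp only [Equiv.Perm.mul_apply]
    rw [hr2, hinv, hr2]
  · intro i h
    simp only [Equiv.Perm.mul_apply] at h
    have : ι (r i) = r i := by
      have := congrArg r h
      rwa [hr2] at this
    exact hfpf _ this
  · rw [heq, fpb_orbit_card_conj]
    congr 1
    rw [Subgroup.zpowers_inv]
end
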